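/- Let n ≥ 1 and let k, k' ∈ P^{++}, i.e., k = (k_1,…,k_n) and k' = (k'_1,…,k'_n) are integer vectors with k_1 > k_2 > … > k_n ≥ 0 and k'_1 > k'_2 > … > k'_n ≥ 0. Then ∫_{F(S̃_n^aff)} cos⁻_k(x) cos⁻_{k'}(x) dx = h_k · δ_{k,k'}, where dx is n-dimensional Lebesgue measure. -/

import Mathlib

open Real Finset MeasureTheory

/-- The antisymmetric multivariate cosine function
`cos⁻_λ(x) = Σ_{σ ∈ S_n} sgn(σ) ∏_{i=1}^n cos(π λ_{σ(i)} x_i)`. -/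
noncomputable def cosMinus (n : ℕ) (lam x : Fin n → ℝ) : ℝ :=
  ∑ σ : Equiv.Perm (Fin n),
    ((Equiv.Perm.sign σ : ℤ) : ℝ) * ∏ i : Fin n, Real.cos (Real.pi * lam (σ i) * x i)

/-- The fundamental domain `F(S̃_n^aff) = {x ∈ ℝ^n : 1 ≥ x_1 ≥ x_2 ≥ … ≥ x_n ≥ 0}`. -/
def Fdom (n : ℕ) : Set (Fin n → ℝ) :=
  {x | (∀ i j : Fin n, i ≤ j → x j ≤ x i) ∧ ∀ i : Fin n, 0 ≤ x i ∧ x i ≤ 1}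


lemma int_cos_int (m : ℤ) :
    ∫ x in (0:ℝ)..1, Real.cos ((m : ℝ) * π * x) = if m = 0 then 1 else 0 := by
  rcases eq_or_ne m 0 with h | h
  · simp [h]
  · rw [if_neg h]
    have hc : (m : ℝ) * π ≠ 0 := by
      apply mul_ne_zero (Int.cast_ne_zero.2 h) Real.pi_ne_zero
    rw [intervalIntegral.integral_comp_mul_left Real.cos hc]
    simp [Real.sin_int_mul_pi]

lemma cos_orth (a b : ℕ) :
    ∫ x in (0:ℝ)..1, Real.cos (π * a * x) * Real.cos (π * b * x)
      = if (a : ℕ) = b then (if a = 0 then (1:ℝ) else 1/2) else 0 := by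
  have key : ∀ x : ℝ, Real.cos (π * a * x) * Real.cos (π * b * x)
      = (Real.cos ((((a : ℤ) - b : ℤ) : ℝ) * π * x)
        + Real.cos ((((a : ℤ) + b : ℤ) : ℝ) * π * x)) / 2 := by
    intro x
    push_cast
    rw [show ((a:ℝ) - b) * π * x = π * a * x - π * b * x by ring,
        show ((a:ℝ) + b) * π * x = π * a * x + π * b * x by ring,
        Real.cos_sub, Real.cos_add]
    ring
  have hint : ∀ c : ℝ, IntervalIntegrable (fun x => Real.cos (c * π * x)) volume 0 1 := by
    intro c
    exact (Real.continuous_cos.comp (by continuity)).intervalIntegrable 0 1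
  simp only [key]
  rw [intervalIntegral.integral_div, intervalIntegral.integral_add (hint _) (hint _),
      int_cos_int, int_cos_int]
  rcases eq_or_ne a b with rfl | hab
  · rcases eq_or_ne a 0 with rfl | ha
    · norm_num
    · rw [if_pos rfl, if_neg ha, if_pos (by simp), if_neg (by simpa using ha)]
      norm_num
  · rw [if_neg hab, if_neg (fun h => hab (by omega)), if_neg (fun h => hab (by omega))]
    norm_num

lemma cosMinus_perm_aux (n : ℕ) (lam x : Fin n → ℝ) (σ : Equiv.Perm (Fin n)) :
    (∑ τ : Equiv.Perm (Fin n),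
      ((Equiv.Perm.sign τ : ℤ) : ℝ) * ∏ i : Fin n, Real.cos (π * lam (τ i) * x (σ i)))
    = ((Equiv.Perm.sign σ : ℤ) : ℝ) *
      ∑ τ : Equiv.Perm (Fin n),
        ((Equiv.Perm.sign τ : ℤ) : ℝ) * ∏ i : Fin n, Real.cos (π * lam (τ i) * x i) := by
  have hsum := Equiv.sum_comp (Equiv.mulRight σ) (fun τ : Equiv.Perm (Fin n) =>
    ((Equiv.Perm.sign τ : ℤ) : ℝ) * ∏ i : Fin n, Real.cos (π * lam (τ i) * x (σ i)))
  rw [← hsum, Finset.mul_sum]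
  refine Finset.sum_congr rfl fun ρ _ => ?_
  have h1 : ∏ i : Fin n, Real.cos (π * lam ((ρ * σ) i) * x (σ i))
      = ∏ j : Fin n, Real.cos (π * lam (ρ j) * x j) :=
    Equiv.prod_comp σ (fun j => Real.cos (π * lam (ρ j) * x j))
  simp only [Equiv.coe_mulRight, h1, Equiv.Perm.sign_mul]
  push_cast
  ring

lemma cosMinus_perm (n : ℕ) (lam x : Fin n → ℝ) (σ : Equiv.Perm (Fin n)) :
    cosMinus n lam (fun i => x (σ i))
      = ((Equiv.Perm.sign σ : ℤ) : ℝ) * cosMinus n lam x :=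
  cosMinus_perm_aux n lam x σ

def Cube (n : ℕ) : Set (Fin n → ℝ) := Set.Icc 0 1

lemma mem_Cube {n : ℕ} {x : Fin n → ℝ} : x ∈ Cube n ↔ ∀ i, 0 ≤ x i ∧ x i ≤ 1 := by
  simp [Cube, Set.mem_Icc, Pi.le_def, forall_and]

lemma isClosed_Fdom (n : ℕ) : IsClosed (Fdom n) := by
  have hset : Fdom n = (⋂ i, ⋂ j, {x : Fin n → ℝ | i ≤ j → x j ≤ x i}) ∩
      ⋂ i, ({x : Fin n → ℝ | 0 ≤ x i} ∩ {x : Fin n → ℝ | x i ≤ 1}) := by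
    ext x
    simp only [Fdom, Set.mem_setOf_eq, Set.mem_inter_iff, Set.mem_iInter, forall_and]
  rw [hset]
  refine IsClosed.inter (isClosed_iInter fun i => isClosed_iInter fun j => ?_)
    (isClosed_iInter fun i => IsClosed.inter ?_ ?_)
  · by_cases hij : i ≤ j
    · simp only [hij, true_implies]
      exact isClosed_le (continuous_apply j) (continuous_apply i)
    · simp only [hij, false_implies, Set.setOf_true]
      exact isClosed_univ
  · exact isClosed_le continuous_const (continuous_apply i)
  · exact isClosed_le (continuous_apply i) continuous_const

def Fp (n : ℕ) (σ : Equiv.Perm (Fin n)) : Set (Fin n → ℝ) :=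
  {x | (fun i => x (σ i)) ∈ Fdom n}

lemma isClosed_Fp (n : ℕ) (σ : Equiv.Perm (Fin n)) : IsClosed (Fp n σ) :=
  (isClosed_Fdom n).preimage (continuous_pi fun i => continuous_apply (σ i))

lemma Fp_subset_Cube (n : ℕ) (σ : Equiv.Perm (Fin n)) : Fp n σ ⊆ Cube n := by
  intro x hx
  rw [mem_Cube]
  intro j
  exact (hx.2 (σ⁻¹ j)).imp (by simp) (by simp)

lemma Cube_eq_iUnion (n : ℕ) : Cube n = ⋃ σ : Equiv.Perm (Fin n), Fp n σ := by
  refine Set.Subset.antisymm ?_ (Set.iUnion_subset fun σ => Fp_subset_Cube n σ)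
  intro x hx
  rw [mem_Cube] at hx
  refine Set.mem_iUnion.2 ⟨Tuple.sort x * Fin.revPerm, ?_, fun i => hx _⟩
  intro i j hij
  have hm := Tuple.monotone_sort x
  have : Fin.rev j ≤ Fin.rev i := Fin.rev_le_rev.2 hij
  simpa using hm this

lemma null_noninj (n : ℕ) : volume {x : Fin n → ℝ | ¬ Function.Injective x} = 0 := by
  have hsub : {x : Fin n → ℝ | ¬ Function.Injective x} ⊆
      ⋃ p : Fin n × Fin n, {x : Fin n → ℝ | p.1 ≠ p.2 ∧ x p.1 = x p.2} := by
    intro x hx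
    simp only [Set.mem_setOf_eq, Function.Injective, not_forall] at hx
    obtain ⟨i, j, hxij, hij⟩ := hx
    exact Set.mem_iUnion.2 ⟨(i, j), hij, hxij⟩
  refine measure_mono_null hsub (measure_iUnion_null fun p => ?_)
  rcases eq_or_ne p.1 p.2 with h | h
  · simp [h]
  · have hset : {x : Fin n → ℝ | p.1 ≠ p.2 ∧ x p.1 = x p.2} =
        (LinearMap.ker ((LinearMap.proj p.1 : (Fin n → ℝ) →ₗ[ℝ] ℝ) - LinearMap.proj p.2) :
          Set (Fin n → ℝ)) := by
      ext x
      simp [LinearMap.mem_ker, sub_eq_zero, h]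
    rw [hset]
    apply MeasureTheory.Measure.addHaar_submodule
    intro htop
    have hmem : (Pi.single p.1 (1:ℝ)) ∈ LinearMap.ker
        ((LinearMap.proj p.1 : (Fin n → ℝ) →ₗ[ℝ] ℝ) - LinearMap.proj p.2) := by
      rw [htop]; trivial
    simp [LinearMap.mem_ker, Pi.single_eq_same, Pi.single_eq_of_ne h.symm] at hmem

lemma perm_eq_one_of_strictAnti {α : Type*} [LinearOrder α] {n : ℕ} {f g : Fin n → α}
    (hf : StrictAnti f) (hg : StrictAnti g) (ρ : Equiv.Perm (Fin n))
    (h : ∀ i, f i = g (ρ i)) : ρ = 1 := by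
  have hmono : StrictMono (ρ : Fin n → Fin n) := by
    intro i j hij
    have h2 : g (ρ j) < g (ρ i) := by rw [← h i, ← h j]; exact hf hij
    exact hg.lt_iff_gt.mp h2
  have hrange : Set.range (ρ : Fin n → Fin n) = Set.range (id : Fin n → Fin n) := by
    simp [Set.range_eq_univ.2 ρ.surjective, Set.range_id]
  haveI : WellFoundedLT (Fin n) := inferInstance
  have heq : (ρ : Fin n → Fin n) = id := (hmono.range_inj strictMono_id).1 hrange
  exact Equiv.ext fun i => congrFun heq i

lemma aedisjoint_Fp (n : ℕ) : Pairwise (Function.onFun (MeasureTheory.AEDisjoint volume) (Fp n)) := by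
  intro σ τ hστ
  refine measure_mono_null ?_ (null_noninj n)
  rintro x ⟨hxσ, hxτ⟩
  simp only [Set.mem_setOf_eq]
  intro hinj
  apply hστ
  have hσa : StrictAnti (fun i => x (σ i)) := by
    intro i j hij
    refine lt_of_le_of_ne (hxσ.1 i j hij.le) fun h => ?_
    exact (σ.injective.ne hij.ne) (hinj h).symm
  have hτa : StrictAnti (fun i => x (τ i)) := by
    intro i j hij
    refine lt_of_le_of_ne (hxτ.1 i j hij.le) fun h => ?_
    exact (τ.injective.ne hij.ne) (hinj h).symm
  have hρ := perm_eq_one_of_strictAnti hσa hτa (τ⁻¹ * σ) (fun i => by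
    simp [Equiv.Perm.mul_apply])
  have h2 := congrArg (fun ρ => τ * ρ) hρ
  simp only [← mul_assoc, mul_inv_cancel, one_mul, mul_one] at h2
  exact h2

lemma setIntegral_Fp (n : ℕ) (f : (Fin n → ℝ) → ℝ) (σ : Equiv.Perm (Fin n))
    (hsym : ∀ x, f (fun i => x (σ i)) = f x) :
    ∫ x in Fp n σ, f x = ∫ x in Fdom n, f x := by
  set S := MeasurableEquiv.piCongrLeft (fun _ : Fin n => ℝ) σ.symm with hSdef
  have hS : ∀ (x : Fin n → ℝ) (j : Fin n), S x j = x (σ j) := by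
    intro x j
    have := MeasurableEquiv.piCongrLeft_apply_apply (σ.symm) (β := fun _ => ℝ) x (σ j)
    simpa using this
  have hmp := MeasureTheory.volume_measurePreserving_piCongrLeft (fun _ : Fin n => ℝ) σ.symm
  have hpre : S ⁻¹' (Fdom n) = Fp n σ := by
    ext x
    have hfun : S x = fun i => x (σ i) := funext (hS x)
    simp only [Set.mem_preimage, hfun, Fp, Set.mem_setOf_eq]
  have key := hmp.setIntegral_preimage_emb S.measurableEmbedding f (Fdom n)
  rw [hpre] at key
  rw [← key]
  apply setIntegral_congr_fun (isClosed_Fp n σ).measurableSet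
  intro x _
  show f x = f (S x)
  have hfun : S x = fun i => x (σ i) := funext (hS x)
  rw [hfun, hsym]

lemma integral_Cube_eq_factorial (n : ℕ) (f : (Fin n → ℝ) → ℝ) (hf : Continuous f)
    (hsym : ∀ (σ : Equiv.Perm (Fin n)) x, f (fun i => x (σ i)) = f x) :
    ∫ x in Cube n, f x = (n.factorial : ℝ) * ∫ x in Fdom n, f x := by
  have hint : IntegrableOn f (Cube n) := by
    exact hf.continuousOn.integrableOn_compact isCompact_Icc
  rw [Cube_eq_iUnion n] at hint ⊢
  rw [MeasureTheory.integral_iUnion_ae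
      (fun σ => (isClosed_Fp n σ).measurableSet.nullMeasurableSet)
      (aedisjoint_Fp n) hint]
  rw [tsum_fintype]
  have : ∀ σ : Equiv.Perm (Fin n), ∫ x in Fp n σ, f x = ∫ x in Fdom n, f x :=
    fun σ => setIntegral_Fp n f σ (hsym σ)
  simp only [this, Finset.sum_const, Finset.card_univ, Fintype.card_perm, Fintype.card_fin,
    nsmul_eq_mul]

lemma cube_prod_integral (n : ℕ) (G : Fin n → ℝ → ℝ) (_hG : ∀ i, Continuous (G i)) :
    ∫ x in Cube n, ∏ i, G i (x i) = ∏ i, ∫ t in (0:ℝ)..1, G i t := by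
  have hmeas : MeasurableSet (Cube n) := (isCompact_Icc.isClosed).measurableSet
  rw [← MeasureTheory.integral_indicator hmeas]
  have hind : ∀ x : Fin n → ℝ, (Cube n).indicator (fun x => ∏ i, G i (x i)) x
      = ∏ i, (Set.Icc (0:ℝ) 1).indicator (G i) (x i) := by
    intro x
    by_cases hx : x ∈ Cube n
    · rw [Set.indicator_of_mem hx]
      refine Finset.prod_congr rfl fun i _ => ?_
      rw [Set.indicator_of_mem (Set.mem_Icc.2 (mem_Cube.1 hx i))]
    · rw [Set.indicator_of_notMem hx]
      obtain ⟨i, hi⟩ := not_forall.1 (fun h => hx (mem_Cube.2 h))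
      refine (Finset.prod_eq_zero (Finset.mem_univ i) ?_).symm
      rw [Set.indicator_of_notMem (by simpa [Set.mem_Icc] using hi)]
  simp only [hind]
  rw [MeasureTheory.volume_pi, MeasureTheory.integral_fintype_prod_eq_prod (ι := Fin n)
    (fun i => (Set.Icc (0:ℝ) 1).indicator (G i))]
  refine Finset.prod_congr rfl fun i _ => ?_
  rw [MeasureTheory.integral_indicator measurableSet_Icc,
    MeasureTheory.integral_Icc_eq_integral_Ioc,
    intervalIntegral.integral_of_le (zero_le_one)]

theorem continuous_orthogonality_antisym_integer (n : ℕ) (hn : 1 ≤ n)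
    (k k' : Fin n → ℕ)
    (hk : ∀ i j : Fin n, i < j → k j < k i)
    (hk' : ∀ i j : Fin n, i < j → k' j < k' i) :
    ∫ x in Fdom n,
        cosMinus n (fun i => (k i : ℝ)) x * cosMinus n (fun i => (k' i : ℝ)) x
      = (∏ i : Fin n, if k i = 0 then (1 : ℝ) else 1 / 2) *
          (if k = k' then (1 : ℝ) else 0) := by
  classical
  set f : (Fin n → ℝ) → ℝ := fun x =>
    cosMinus n (fun i => (k i : ℝ)) x * cosMinus n (fun i => (k' i : ℝ)) x with hfdef
  have hsgn : ∀ σ : Equiv.Perm (Fin n),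
      ((Equiv.Perm.sign σ : ℤ) : ℝ) * ((Equiv.Perm.sign σ : ℤ) : ℝ) = 1 := by
    intro σ
    rcases Int.units_eq_one_or (Equiv.Perm.sign σ) with h | h <;> simp [h]
  have hsym : ∀ (σ : Equiv.Perm (Fin n)) (x : Fin n → ℝ), f (fun i => x (σ i)) = f x := by
    intro σ x
    simp only [hfdef]
    rw [cosMinus_perm n _ x σ, cosMinus_perm n _ x σ, mul_mul_mul_comm, hsgn σ, one_mul]
  have hcontCM : ∀ lam : Fin n → ℝ, Continuous (fun x => cosMinus n lam x) := by
    intro lam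
    unfold cosMinus
    apply continuous_finset_sum
    intro σ _
    exact continuous_const.mul (continuous_finset_prod _ fun i _ =>
      Real.continuous_cos.comp (continuous_const.mul (continuous_apply i)))
  have hcf : Continuous f := (hcontCM _).mul (hcontCM _)
  have hIC : ∀ g : (Fin n → ℝ) → ℝ, Continuous g →
      Integrable g (volume.restrict (Cube n)) := fun g hg =>
    hg.continuousOn.integrableOn_compact (isCompact_Icc : IsCompact (Cube n))
  have hcube : ∫ x in Cube n, f x =
      ∑ σ : Equiv.Perm (Fin n), ∑ τ : Equiv.Perm (Fin n),
        (((Equiv.Perm.sign σ : ℤ) : ℝ) * ((Equiv.Perm.sign τ : ℤ) : ℝ)) *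
          ∏ i : Fin n,
            (if k (σ i) = k' (τ i) then (if k (σ i) = 0 then (1:ℝ) else 1/2) else 0) := by
    have hexp : ∀ x : Fin n → ℝ, f x =
        ∑ σ : Equiv.Perm (Fin n), ∑ τ : Equiv.Perm (Fin n),
          (((Equiv.Perm.sign σ : ℤ) : ℝ) * ((Equiv.Perm.sign τ : ℤ) : ℝ)) *
            ∏ i : Fin n,
              (Real.cos (π * (k (σ i) : ℝ) * x i) * Real.cos (π * (k' (τ i) : ℝ) * x i)) := by
      intro x
      simp only [hfdef, cosMinus, Finset.sum_mul_sum]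
      refine Finset.sum_congr rfl fun σ _ => Finset.sum_congr rfl fun τ _ => ?_
      rw [Finset.prod_mul_distrib]
      ring
    simp only [hexp]
    rw [MeasureTheory.integral_finset_sum]
    swap
    · intro σ _
      exact hIC _ (continuous_finset_sum _ fun τ _ => continuous_const.mul
        (continuous_finset_prod _ fun i _ =>
          (Real.continuous_cos.comp (continuous_const.mul (continuous_apply i))).mul
            (Real.continuous_cos.comp (continuous_const.mul (continuous_apply i)))))
    refine Finset.sum_congr rfl fun σ _ => ?_
    rw [MeasureTheory.integral_finset_sum]
    swap
    · intro τ _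
      exact hIC _ (continuous_const.mul (continuous_finset_prod _ fun i _ =>
        (Real.continuous_cos.comp (continuous_const.mul (continuous_apply i))).mul
          (Real.continuous_cos.comp (continuous_const.mul (continuous_apply i)))))
    refine Finset.sum_congr rfl fun τ _ => ?_
    rw [MeasureTheory.integral_const_mul]
    congr 1
    rw [cube_prod_integral n
      (fun i t => Real.cos (π * (k (σ i) : ℝ) * t) * Real.cos (π * (k' (τ i) : ℝ) * t))
      (fun i => (Real.continuous_cos.comp (continuous_const.mul continuous_id)).mul
        (Real.continuous_cos.comp (continuous_const.mul continuous_id)))]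
    exact Finset.prod_congr rfl fun i _ => cos_orth (k (σ i)) (k' (τ i))
  have hKa : StrictAnti k := fun i j hij => hk i j hij
  have hKa' : StrictAnti k' := fun i j hij => hk' i j hij
  have heval : (∑ σ : Equiv.Perm (Fin n), ∑ τ : Equiv.Perm (Fin n),
        (((Equiv.Perm.sign σ : ℤ) : ℝ) * ((Equiv.Perm.sign τ : ℤ) : ℝ)) *
          ∏ i : Fin n,
            (if k (σ i) = k' (τ i) then (if k (σ i) = 0 then (1:ℝ) else 1/2) else 0))
      = (n.factorial : ℝ) * ((∏ i : Fin n, if k i = 0 then (1:ℝ) else 1/2) *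
          (if k = k' then (1:ℝ) else 0)) := by
    rcases eq_or_ne k k' with hkk | hkk
    · subst hkk
      rw [if_pos rfl, mul_one]
      have hinner : ∀ σ : Equiv.Perm (Fin n),
          (∑ τ : Equiv.Perm (Fin n),
            (((Equiv.Perm.sign σ : ℤ) : ℝ) * ((Equiv.Perm.sign τ : ℤ) : ℝ)) *
              ∏ i : Fin n,
                (if k (σ i) = k (τ i) then (if k (σ i) = 0 then (1:ℝ) else 1/2) else 0))
          = ∏ i : Fin n, if k i = 0 then (1:ℝ) else 1/2 := by
        intro σ
        rw [Finset.sum_eq_single σ]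
        · have hi : ∀ i : Fin n,
              (if k (σ i) = k (σ i) then (if k (σ i) = 0 then (1:ℝ) else 1/2) else 0)
              = (if k (σ i) = 0 then (1:ℝ) else 1/2) := fun i => if_pos rfl
          rw [Finset.prod_congr rfl (fun i _ => hi i), hsgn σ, one_mul,
            Equiv.prod_comp σ (fun j => if k j = 0 then (1:ℝ) else 1/2)]
        · intro τ _ hτ
          obtain ⟨i, hij⟩ : ∃ i, σ i ≠ τ i := by
            by_contra hcon
            push_neg at hcon
            exact hτ (Equiv.ext fun i => (hcon i).symm)
          refine mul_eq_zero_of_right _ (Finset.prod_eq_zero (Finset.mem_univ i) ?_)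
          exact if_neg fun h => hij (hKa.injective h)
        · intro h
          exact absurd (Finset.mem_univ σ) h
      rw [Finset.sum_congr rfl (fun σ _ => hinner σ), Finset.sum_const, Finset.card_univ,
        Fintype.card_perm, Fintype.card_fin, nsmul_eq_mul]
    · rw [if_neg hkk, mul_zero, mul_zero]
      refine Finset.sum_eq_zero fun σ _ => Finset.sum_eq_zero fun τ _ => ?_
      obtain ⟨i, hi⟩ : ∃ i, k (σ i) ≠ k' (τ i) := by
        by_contra hcon
        push_neg at hcon
        have h2 : ∀ j, k j = k' ((τ * σ⁻¹) j) := by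
          intro j
          have h3 := hcon (σ⁻¹ j)
          simpa [Equiv.Perm.mul_apply] using h3
        have hρ := perm_eq_one_of_strictAnti hKa hKa' (τ * σ⁻¹) h2
        apply hkk
        funext j
        have h4 := h2 j
        rw [hρ] at h4
        simpa using h4
      exact mul_eq_zero_of_right _ (Finset.prod_eq_zero (Finset.mem_univ i) (if_neg hi))
  have hfac := integral_Cube_eq_factorial n f hcf hsym
  have hne : (n.factorial : ℝ) ≠ 0 := Nat.cast_ne_zero.2 (Nat.factorial_ne_zero n)
  refine mul_left_cancel₀ hne ?_
  rw [← hfac, hcube, heval]
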